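/- If ζ^μ and ξ^μ are smooth vector fields on ℝ^D with D⁺_μ ζ_ν = 0 and D⁺_μ ξ_ν = 0 for all μ,ν, then their Lie bracket η^μ := ζ^ν ∂_ν ξ^μ − ξ^ν ∂_ν ζ^μ also satisfies D⁺_μ η_ν = 0 for all μ,ν. The analogous statement holds with D⁻ in place of D⁺. -/

import Mathlib

noncomputable section

/-- Partial derivative of `f` at `x` in the `μ`-th coordinate direction. -/
def pd {D : ℕ} (μ : Fin D) (f : (Fin D → ℝ) → ℝ) (x : Fin D → ℝ) : ℝ :=
  fderiv ℝ f x (Pi.single μ 1)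

/-- A smooth real-valued function. -/
def Sm {D : ℕ} (f : (Fin D → ℝ) → ℝ) : Prop := ContDiff ℝ (⊤ : ℕ∞) f

/-- A smooth vector field on `ℝ^D`. -/
def SmoothVF {D : ℕ} (V : (Fin D → ℝ) → Fin D → ℝ) : Prop := ∀ μ, Sm fun x => V x μ

/-- A smooth field of 2-tensors on `ℝ^D`. -/
def Smooth2T {D : ℕ} (T : (Fin D → ℝ) → Fin D → Fin D → ℝ) : Prop :=
  ∀ μ ν, Sm fun x => T x μ ν

/-- The connection coefficients `Γ_{μν,ρ} = ½(∂_μG_{νρ} + ∂_νG_{μρ} − ∂_ρG_{μν})`. -/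
def Gam {D : ℕ} (G : (Fin D → ℝ) → Fin D → Fin D → ℝ) (μ ν ρ : Fin D) (x : Fin D → ℝ) : ℝ :=
  (pd μ (fun y => G y ν ρ) x + pd ν (fun y => G y μ ρ) x - pd ρ (fun y => G y μ ν) x) / 2

/-- The torsion `H_{μνρ} = ∂_μB_{νρ} + ∂_νB_{ρμ} + ∂_ρB_{μν}`. -/
def Htor {D : ℕ} (B : (Fin D → ℝ) → Fin D → Fin D → ℝ) (μ ν ρ : Fin D) (x : Fin D → ℝ) : ℝ :=
  pd μ (fun y => B y ν ρ) x + pd ν (fun y => B y ρ μ) x + pd ρ (fun y => B y μ ν) x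

/-- `Γ⁺_{μν,ρ} = Γ_{μν,ρ} + ½H_{μνρ}`. -/
def GamP {D : ℕ} (G B : (Fin D → ℝ) → Fin D → Fin D → ℝ) (μ ν ρ : Fin D) (x : Fin D → ℝ) : ℝ :=
  Gam G μ ν ρ x + Htor B μ ν ρ x / 2

/-- `Γ⁻_{μν,ρ} = Γ_{μν,ρ} − ½H_{μνρ}`. -/
def GamM {D : ℕ} (G B : (Fin D → ℝ) → Fin D → Fin D → ℝ) (μ ν ρ : Fin D) (x : Fin D → ℝ) : ℝ :=
  Gam G μ ν ρ x - Htor B μ ν ρ x / 2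

/-- The lowered components `V_μ = G_{μν}V^ν` of a vector field. -/
def lowerV {D : ℕ} (G : (Fin D → ℝ) → Fin D → Fin D → ℝ)
    (V : (Fin D → ℝ) → Fin D → ℝ) (μ : Fin D) (x : Fin D → ℝ) : ℝ :=
  ∑ ν, G x μ ν * V x ν

/-- The covariant derivative `D⁺_μV_ν = G_{νρ}∂_μV^ρ + Γ⁺_{μρ,ν}V^ρ`. -/
def Dp {D : ℕ} (G B : (Fin D → ℝ) → Fin D → Fin D → ℝ)
    (V : (Fin D → ℝ) → Fin D → ℝ) (μ ν : Fin D) (x : Fin D → ℝ) : ℝ :=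
  (∑ ρ, G x ν ρ * pd μ (fun y => V y ρ) x) + ∑ ρ, GamP G B μ ρ ν x * V x ρ

/-- The covariant derivative `D⁻_μV_ν = G_{νρ}∂_μV^ρ + Γ⁻_{μρ,ν}V^ρ`. -/
def Dm {D : ℕ} (G B : (Fin D → ℝ) → Fin D → Fin D → ℝ)
    (V : (Fin D → ℝ) → Fin D → ℝ) (μ ν : Fin D) (x : Fin D → ℝ) : ℝ :=
  (∑ ρ, G x ν ρ * pd μ (fun y => V y ρ) x) + ∑ ρ, GamM G B μ ρ ν x * V x ρ

/-- The Lie derivative of the metric: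
`(ℒ_ζG)_{μν} = ζ^ρ∂_ρG_{μν} + ∂_μζ^ρ·G_{ρν} + ∂_νζ^ρ·G_{μρ}`. -/
def lieG {D : ℕ} (G : (Fin D → ℝ) → Fin D → Fin D → ℝ)
    (ζ : (Fin D → ℝ) → Fin D → ℝ) (μ ν : Fin D) (x : Fin D → ℝ) : ℝ :=
  (∑ ρ, ζ x ρ * pd ρ (fun y => G y μ ν) x)
    + (∑ ρ, pd μ (fun y => ζ y ρ) x * G x ρ ν)
    + ∑ ρ, pd ν (fun y => ζ y ρ) x * G x μ ρ

/-- A Killing pair `(ζ, b)`: `D⁻_μζ_ν + D⁺_νζ_μ + ∂_μb_ν − ∂_νb_μ = 0`. -/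
def IsKillingPair {D : ℕ} (G B : (Fin D → ℝ) → Fin D → Fin D → ℝ)
    (ζ b : (Fin D → ℝ) → Fin D → ℝ) : Prop :=
  ∀ (μ ν : Fin D) (x : Fin D → ℝ),
    Dm G B ζ μ ν x + Dp G B ζ ν μ x
      + pd μ (fun y => b y ν) x - pd ν (fun y => b y μ) x = 0

/-! ### Auxiliary development -/

section Toolbox
variable {D : ℕ} {f g : (Fin D → ℝ) → ℝ} {x : Fin D → ℝ} {c : Fin D}

theorem Sm.diffAt (hf : Sm f) : DifferentiableAt ℝ f x :=
  (hf.differentiable (by simp)).differentiableAt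

theorem Sm.pd (hf : Sm f) : Sm (fun y => pd c f y) := by
  have h1 : ContDiff ℝ (⊤:ℕ∞) (fderiv ℝ f) := hf.fderiv_right (le_refl _)
  exact h1.clm_apply contDiff_const

theorem Sm.add' (hf : Sm f) (hg : Sm g) : Sm (fun y => f y + g y) := ContDiff.add hf hg
theorem Sm.sub' (hf : Sm f) (hg : Sm g) : Sm (fun y => f y - g y) := ContDiff.sub hf hg
theorem Sm.mul' (hf : Sm f) (hg : Sm g) : Sm (fun y => f y * g y) := ContDiff.mul hf hg
theorem Sm.neg' (hf : Sm f) : Sm (fun y => -f y) := ContDiff.neg hf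
theorem Sm.sum' {ι : Type*} {s : Finset ι} {F : ι → (Fin D → ℝ) → ℝ} (h : ∀ i ∈ s, Sm (F i)) :
    Sm (fun y => ∑ i ∈ s, F i y) := ContDiff.sum h
theorem Sm.div2 (hf : Sm f) : Sm (fun y => f y / 2) := ContDiff.div_const hf 2
theorem Sm.cmul (a : ℝ) (hf : Sm f) : Sm (fun y => a * f y) := ContDiff.mul contDiff_const hf

theorem pd_add (hf : DifferentiableAt ℝ f x) (hg : DifferentiableAt ℝ g x) :
    pd c (fun y => f y + g y) x = pd c f x + pd c g x := by
  unfold pd; rw [fderiv_fun_add hf hg]; rfl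
theorem pd_sub (hf : DifferentiableAt ℝ f x) (hg : DifferentiableAt ℝ g x) :
    pd c (fun y => f y - g y) x = pd c f x - pd c g x := by
  unfold pd; rw [fderiv_fun_sub hf hg]; rfl
theorem pd_mul (hf : DifferentiableAt ℝ f x) (hg : DifferentiableAt ℝ g x) :
    pd c (fun y => f y * g y) x = pd c f x * g x + f x * pd c g x := by
  unfold pd; rw [fderiv_fun_mul hf hg]; simp; ring
theorem pd_neg : pd c (fun y => -f y) x = -pd c f x := by
  unfold pd; rw [fderiv_fun_neg]; rfl
theorem pd_cmul (a : ℝ) (hf : DifferentiableAt ℝ f x) :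
    pd c (fun y => a * f y) x = a * pd c f x := by
  unfold pd; rw [fderiv_const_mul hf]; rfl
theorem pd_div2 (hf : DifferentiableAt ℝ f x) :
    pd c (fun y => f y / 2) x = pd c f x / 2 := by
  rw [show (fun y => f y / 2) = fun y => (2⁻¹:ℝ) * f y from funext fun y => by ring,
    pd_cmul _ hf]; ring
theorem pd_sum {ι : Type*} {s : Finset ι} {F : ι → (Fin D → ℝ) → ℝ}
    (h : ∀ i ∈ s, DifferentiableAt ℝ (F i) x) :
    pd c (fun y => ∑ i ∈ s, F i y) x = ∑ i ∈ s, pd c (F i) x := by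
  unfold pd; rw [fderiv_fun_sum h]; simp
theorem pd_zero : pd c (fun _ => (0:ℝ)) x = 0 := by
  unfold pd; rw [fderiv_fun_const]; rfl
theorem pd_comm (hf : Sm f) (a b : Fin D) :
    pd a (fun y => pd b f y) x = pd b (fun y => pd a f y) x := by
  have hdf : ContDiff ℝ (⊤:ℕ∞) (fderiv ℝ f) := hf.fderiv_right (le_refl _)
  have h1 : ∀ (v w : Fin D → ℝ), fderiv ℝ (fun y => fderiv ℝ f y v) x w
      = fderiv ℝ (fderiv ℝ f) x w v := by
    intro v w
    rw [fderiv_clm_apply (hdf.differentiable (by simp)).differentiableAt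
      (differentiableAt_const v)]
    simp
  have hs : IsSymmSndFDerivAt ℝ f x :=
    ContDiffAt.isSymmSndFDerivAt hf.contDiffAt (by rw [minSmoothness_of_isRCLikeNormedField]; exact WithTop.coe_le_coe.mpr (le_top : (2:ℕ∞) ≤ ⊤))
  unfold pd
  rw [h1, h1]
  exact hs _ _

end Toolbox

/-- `Γ^e_{ab,d} = Γ_{ab,d} + (e/2) H_{abd}`, a common generalization of `Γ⁺` and `Γ⁻`. -/
def GamE {D : ℕ} (e : ℝ) (G B : (Fin D → ℝ) → Fin D → Fin D → ℝ) (a b d : Fin D)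
    (x : Fin D → ℝ) : ℝ :=
  Gam G a b d x + e * (Htor B a b d x / 2)

/-- The covariant derivative with torsion sign `e`. -/
def DDe {D : ℕ} (e : ℝ) (G B : (Fin D → ℝ) → Fin D → Fin D → ℝ)
    (V : (Fin D → ℝ) → Fin D → ℝ) (μ ν : Fin D) (x : Fin D → ℝ) : ℝ :=
  (∑ ρ, G x ν ρ * pd μ (fun y => V y ρ) x) + ∑ ρ, GamE e G B μ ρ ν x * V x ρ

section Aux
variable {D : ℕ} (e : ℝ) (G B : (Fin D → ℝ) → Fin D → Fin D → ℝ)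
  (v : (Fin D → ℝ) → Fin D → ℝ)

theorem Dp_eq (V μ ν x) : Dp G B V μ ν x = DDe 1 G B V μ ν x := by
  simp only [Dp, DDe, GamP, GamE, one_mul]

theorem Dm_eq (V μ ν x) : Dm G B V μ ν x = DDe (-1) G B V μ ν x := by
  simp only [Dm, DDe, GamM, GamE, neg_one_mul, ← sub_eq_add_neg]

theorem SmGamE (hGs : Smooth2T G) (hBs : Smooth2T B) (a b d : Fin D) :
    Sm (fun y => GamE e G B a b d y) :=
  Sm.add' (Sm.div2 (Sm.sub' (Sm.add' (Sm.pd (hGs b d)) (Sm.pd (hGs a d))) (Sm.pd (hGs a b))))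
    (Sm.cmul e (Sm.div2 (Sm.add' (Sm.add' (Sm.pd (hBs b d)) (Sm.pd (hBs d a)))
      (Sm.pd (hBs a b)))))

theorem pd_GamE (hGs : Smooth2T G) (hBs : Smooth2T B) (c a b d : Fin D) (x : Fin D → ℝ) :
    pd c (fun y => GamE e G B a b d y) x = ((((pd c (fun y => pd a (fun z => G z b d) y) x + pd c (fun y => pd b (fun z => G z a d) y) x) - pd c (fun y => pd d (fun z => G z a b) y) x) / 2) + (e * (((pd c (fun y => pd a (fun z => B z b d) y) x + pd c (fun y => pd b (fun z => B z d a) y) x) + pd c (fun y => pd d (fun z => B z a b) y) x) / 2))) := by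
  have g1 : Sm (fun y => pd a (fun z => G z b d) y) := Sm.pd (hGs b d)
  have g2 : Sm (fun y => pd b (fun z => G z a d) y) := Sm.pd (hGs a d)
  have g3 : Sm (fun y => pd d (fun z => G z a b) y) := Sm.pd (hGs a b)
  have b1 : Sm (fun y => pd a (fun z => B z b d) y) := Sm.pd (hBs b d)
  have b2 : Sm (fun y => pd b (fun z => B z d a) y) := Sm.pd (hBs d a)
  have b3 : Sm (fun y => pd d (fun z => B z a b) y) := Sm.pd (hBs a b)
  rw [show (fun y => GamE e G B a b d y) =
      (fun y => (pd a (fun z => G z b d) y + pd b (fun z => G z a d) y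
          - pd d (fun z => G z a b) y) / 2
        + e * ((pd a (fun z => B z b d) y + pd b (fun z => B z d a) y
          + pd d (fun z => B z a b) y) / 2)) from rfl,
    pd_add (Sm.div2 (Sm.sub' (Sm.add' g1 g2) g3)).diffAt
      (Sm.cmul e (Sm.div2 (Sm.add' (Sm.add' b1 b2) b3))).diffAt,
    pd_div2 (Sm.sub' (Sm.add' g1 g2) g3).diffAt,
    pd_sub (Sm.add' g1 g2).diffAt g3.diffAt,
    pd_add g1.diffAt g2.diffAt,
    pd_cmul e (Sm.div2 (Sm.add' (Sm.add' b1 b2) b3)).diffAt,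
    pd_div2 (Sm.add' (Sm.add' b1 b2) b3).diffAt,
    pd_add (Sm.add' b1 b2).diffAt b3.diffAt,
    pd_add b1.diffAt b2.diffAt]
  try ring

theorem DDe_val (m n : Fin D) (x : Fin D → ℝ) :
    DDe e G B v m n x = ∑ σ, ((G x n σ * pd m (fun y => v y σ) x) + (((((pd m (fun y => G y σ n) x + pd σ (fun y => G y m n) x) - pd n (fun y => G y m σ) x) / 2) + (e * (((pd m (fun y => B y σ n) x + pd σ (fun y => B y n m) x) + pd n (fun y => B y m σ) x) / 2))) * v x σ)) := by
  rw [show DDe e G B v m n x = (∑ σ, G x n σ * pd m (fun z => v z σ) x)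
      + ∑ σ, GamE e G B m σ n x * v x σ from rfl, ← Finset.sum_add_distrib]
  refine Finset.sum_congr rfl fun σ _ => ?_
  simp only [GamE, Gam, Htor]
  try ring

theorem pd_DDe (hGs : Smooth2T G) (hBs : Smooth2T B) (hv : SmoothVF v) (c m n : Fin D)
    (x : Fin D → ℝ) :
    pd c (fun y => DDe e G B v m n y) x = ∑ σ, ((((pd c (fun y => G y n σ) x * pd m (fun y => v y σ) x) + (G x n σ * pd c (fun y => pd m (fun z => v z σ) y) x)) + (((((pd c (fun y => pd m (fun z => G z σ n) y) x + pd c (fun y => pd σ (fun z => G z m n) y) x) - pd c (fun y => pd n (fun z => G z m σ) y) x) / 2) + (e * (((pd c (fun y => pd m (fun z => B z σ n) y) x + pd c (fun y => pd σ (fun z => B z n m) y) x) + pd c (fun y => pd n (fun z => B z m σ) y) x) / 2))) * v x σ)) + (((((pd m (fun y => G y σ n) x + pd σ (fun y => G y m n) x) - pd n (fun y => G y m σ) x) / 2) + (e * (((pd m (fun y => B y σ n) x + pd σ (fun y => B y n m) x) + pd n (fun y => B y m σ) x) / 2))) * pd c (fun y => v y σ) x)) := by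
  have hS1 : ∀ i : Fin D, Sm (fun y => G y n i * pd m (fun z => v z i) y) :=
    fun i => Sm.mul' (hGs n i) (Sm.pd (hv i))
  have hS2 : ∀ i : Fin D, Sm (fun y => GamE e G B m i n y * v y i) :=
    fun i => Sm.mul' (SmGamE e G B hGs hBs m i n) (hv i)
  rw [show (fun y => DDe e G B v m n y) = (fun y => (∑ σ, G y n σ * pd m (fun z => v z σ) y)
      + ∑ σ, GamE e G B m σ n y * v y σ) from rfl,
    pd_add (Sm.sum' fun i _ => hS1 i).diffAt (Sm.sum' fun i _ => hS2 i).diffAt,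
    pd_sum (fun i _ => (hS1 i).diffAt), pd_sum (fun i _ => (hS2 i).diffAt),
    ← Finset.sum_add_distrib]
  refine Finset.sum_congr rfl fun σ _ => ?_
  rw [pd_mul (hGs n σ).diffAt (Sm.pd (hv σ)).diffAt,
    pd_mul (SmGamE e G B hGs hBs m σ n).diffAt (hv σ).diffAt,
    pd_GamE e G B hGs hBs c m σ n x]
  simp only [GamE, Gam, Htor]
  try ring

theorem sum_anti {D : ℕ} (f : Fin D → Fin D → ℝ) (h : ∀ ρ σ, f ρ σ + f σ ρ = 0) :
    ∑ ρ, ∑ σ, f ρ σ = 0 := by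
  have key : ∀ a : Fin D, ((∑ b, f a b) + ∑ b, f b a) = 0 := fun a => by
    rw [← Finset.sum_add_distrib]; exact Finset.sum_eq_zero fun b _ => h a b
  have h2 : (∑ ρ, ∑ σ, f ρ σ) + (∑ ρ, ∑ σ, f ρ σ) = 0 := by
    calc (∑ ρ, ∑ σ, f ρ σ) + (∑ ρ, ∑ σ, f ρ σ)
        = (∑ ρ, ∑ σ, f ρ σ) + (∑ σ, ∑ ρ, f ρ σ) := by rw [Finset.sum_comm]
      _ = ∑ ρ, ((∑ σ, f ρ σ) + ∑ σ, f σ ρ) := by rw [← Finset.sum_add_distrib]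
      _ = 0 := Finset.sum_eq_zero fun a _ => key a
  linarith

end Aux

section Key
variable {D : ℕ}

/-- Left summand. -/
def Lt (e : ℝ) (G B : (Fin D → ℝ) → Fin D → Fin D → ℝ) (ζ ξ : (Fin D → ℝ) → Fin D → ℝ)
    (μ ν : Fin D) (x : Fin D → ℝ) (ρ σ : Fin D) : ℝ :=
  ((G x ν ρ * (((pd μ (fun y => ζ y σ) x * pd σ (fun y => ξ y ρ) x) + (ζ x σ * pd μ (fun y => pd σ (fun z => ξ z ρ) y) x)) - ((pd μ (fun y => ξ y σ) x * pd σ (fun y => ζ y ρ) x) + (ξ x σ * pd μ (fun y => pd σ (fun z => ζ z ρ) y) x)))) + (((((pd μ (fun y => G y ρ ν) x + pd ρ (fun y => G y μ ν) x) - pd ν (fun y => G y μ ρ) x) / 2) + (e * (((pd μ (fun y => B y ρ ν) x + pd ρ (fun y => B y ν μ) x) + pd ν (fun y => B y μ ρ) x) / 2))) * ((ζ x σ * pd σ (fun y => ξ y ρ) x) - (ξ x σ * pd σ (fun y => ζ y ρ) x))))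

/-- Right summand. -/
def Rt (e : ℝ) (G B : (Fin D → ℝ) → Fin D → Fin D → ℝ) (ζ ξ : (Fin D → ℝ) → Fin D → ℝ)
    (μ ν : Fin D) (x : Fin D → ℝ) (ρ σ : Fin D) : ℝ :=
  ((((ζ x ρ * ((((((pd ρ (fun y => G y ν σ) x * pd μ (fun y => ξ y σ) x) + (G x ν σ * pd ρ (fun y => pd μ (fun z => ξ z σ) y) x)) + (((((pd ρ (fun y => pd μ (fun z => G z σ ν) y) x + pd ρ (fun y => pd σ (fun z => G z μ ν) y) x) - pd ρ (fun y => pd ν (fun z => G z μ σ) y) x) / 2) + (e * (((pd ρ (fun y => pd μ (fun z => B z σ ν) y) x + pd ρ (fun y => pd σ (fun z => B z ν μ) y) x) + pd ρ (fun y => pd ν (fun z => B z μ σ) y) x) / 2))) * ξ x σ)) + (((((pd μ (fun y => G y σ ν) x + pd σ (fun y => G y μ ν) x) - pd ν (fun y => G y μ σ) x) / 2) + (e * (((pd μ (fun y => B y σ ν) x + pd σ (fun y => B y ν μ) x) + pd ν (fun y => B y μ σ) x) / 2))) * pd ρ (fun y => ξ y σ) x)) - (((((pd ν (fun y => G y ρ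 σ) x * pd μ (fun y => ξ y σ) x) + (G x ρ σ * pd ν (fun y => pd μ (fun z => ξ z σ) y) x)) + (((((pd ν (fun y => pd μ (fun z => G z σ ρ) y) x + pd ν (fun y => pd σ (fun z => G z μ ρ) y) x) - pd ν (fun y => pd ρ (fun z => G z μ σ) y) x) / 2) + (e * (((pd ν (fun y => pd μ (fun z => B z σ ρ) y) x + pd ν (fun y => pd σ (fun z => B z ρ μ) y) x) + pd ν (fun y => pd ρ (fun z => B z μ σ) y) x) / 2))) * ξ x σ)) + (((((pd μ (fun y => G y σ ρ) x + pd σ (fun y => G y μ ρ) x) - pd ρ (fun y => G y μ σ) x) / 2) + (e * (((pd μ (fun y => B y σ ρ) x + pd σ (fun y => B y ρ μ) x) + pd ρ (fun y => B y μ σ) x) / 2))) * pd ν (fun y => ξ y σ) x)) / 2)) + (((((pd μ (fun y => G y ρ σ) x * pd ν (fun y => ξ y σ) x) + (G x ρ σ * pd μ (fun y => pd ν (fun z => ξ z σ) y) x)) + (((((pd μ (fun y => pd ν (fun z => G z σ ρ) y) x + pd μ (fun y => pd σ (fun z => G z ν ρ) y) x) - pd μ (fun y => pd ρ (fun z =>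 G z ν σ) y) x) / 2) + (e * (((pd μ (fun y => pd ν (fun z => B z σ ρ) y) x + pd μ (fun y => pd σ (fun z => B z ρ ν) y) x) + pd μ (fun y => pd ρ (fun z => B z ν σ) y) x) / 2))) * ξ x σ)) + (((((pd ν (fun y => G y σ ρ) x + pd σ (fun y => G y ν ρ) x) - pd ρ (fun y => G y ν σ) x) / 2) + (e * (((pd ν (fun y => B y σ ρ) x + pd σ (fun y => B y ρ ν) x) + pd ρ (fun y => B y ν σ) x) / 2))) * pd μ (fun y => ξ y σ) x)) / 2))) + (pd μ (fun y => ζ y ρ) x * (((G x ν σ * pd ρ (fun y => ξ y σ) x) + (((((pd ρ (fun y => G y σ ν) x + pd σ (fun y => G y ρ ν) x) - pd ν (fun y => G y ρ σ) x) / 2) + (e * (((pd ρ (fun y => B y σ ν) x + pd σ (fun y => B y ν ρ) x) + pd ν (fun y => B y ρ σ) x) / 2))) * ξ x σ)) + (((G x ρ σ * pd ν (fun y => ξ y σ) x) + (((((pd ν (fun y => G y σ ρ) x + pd σ (fun y => G y ν ρ) x) - pd ρ (fun y => G y ν σ) x) / 2) + (e * (((pd ν (fun y => B y σ ρ) x +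 pd σ (fun y => B y ρ ν) x) + pd ρ (fun y => B y ν σ) x) / 2))) * ξ x σ)) / 2)))) + (pd ν (fun y => ζ y ρ) x * (((G x ρ σ * pd μ (fun y => ξ y σ) x) + (((((pd μ (fun y => G y σ ρ) x + pd σ (fun y => G y μ ρ) x) - pd ρ (fun y => G y μ σ) x) / 2) + (e * (((pd μ (fun y => B y σ ρ) x + pd σ (fun y => B y ρ μ) x) + pd ρ (fun y => B y μ σ) x) / 2))) * ξ x σ)) / 2))) - (((ξ x ρ * ((((((pd ρ (fun y => G y ν σ) x * pd μ (fun y => ζ y σ) x) + (G x ν σ * pd ρ (fun y => pd μ (fun z => ζ z σ) y) x)) + (((((pd ρ (fun y => pd μ (fun z => G z σ ν) y) x + pd ρ (fun y => pd σ (fun z => G z μ ν) y) x) - pd ρ (fun y => pd ν (fun z => G z μ σ) y) x) / 2) + (e * (((pd ρ (fun y => pd μ (fun z => B z σ ν) y) x + pd ρ (fun y => pd σ (fun z => B z ν μ) y) x) + pd ρ (fun y => pd ν (fun z => B z μ σ) y) x) / 2))) * ζ x σ)) + (((((pd μ (fun y => G y σ ν) x + pd σ (fun y => G y μ ν) x)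 - pd ν (fun y => G y μ σ) x) / 2) + (e * (((pd μ (fun y => B y σ ν) x + pd σ (fun y => B y ν μ) x) + pd ν (fun y => B y μ σ) x) / 2))) * pd ρ (fun y => ζ y σ) x)) - (((((pd ν (fun y => G y ρ σ) x * pd μ (fun y => ζ y σ) x) + (G x ρ σ * pd ν (fun y => pd μ (fun z => ζ z σ) y) x)) + (((((pd ν (fun y => pd μ (fun z => G z σ ρ) y) x + pd ν (fun y => pd σ (fun z => G z μ ρ) y) x) - pd ν (fun y => pd ρ (fun z => G z μ σ) y) x) / 2) + (e * (((pd ν (fun y => pd μ (fun z => B z σ ρ) y) x + pd ν (fun y => pd σ (fun z => B z ρ μ) y) x) + pd ν (fun y => pd ρ (fun z => B z μ σ) y) x) / 2))) * ζ x σ)) + (((((pd μ (fun y => G y σ ρ) x + pd σ (fun y => G y μ ρ) x) - pd ρ (fun y => G y μ σ) x) / 2) + (e * (((pd μ (fun y => B y σ ρ) x + pd σ (fun y => B y ρ μ) x) + pd ρ (fun y => B y μ σ) x) / 2))) * pd ν (fun y => ζ y σ) x)) / 2)) + (((((pd μ (fun y => G y ρ σ) x * pd ν (fun y => ζ y σ)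 x) + (G x ρ σ * pd μ (fun y => pd ν (fun z => ζ z σ) y) x)) + (((((pd μ (fun y => pd ν (fun z => G z σ ρ) y) x + pd μ (fun y => pd σ (fun z => G z ν ρ) y) x) - pd μ (fun y => pd ρ (fun z => G z ν σ) y) x) / 2) + (e * (((pd μ (fun y => pd ν (fun z => B z σ ρ) y) x + pd μ (fun y => pd σ (fun z => B z ρ ν) y) x) + pd μ (fun y => pd ρ (fun z => B z ν σ) y) x) / 2))) * ζ x σ)) + (((((pd ν (fun y => G y σ ρ) x + pd σ (fun y => G y ν ρ) x) - pd ρ (fun y => G y ν σ) x) / 2) + (e * (((pd ν (fun y => B y σ ρ) x + pd σ (fun y => B y ρ ν) x) + pd ρ (fun y => B y ν σ) x) / 2))) * pd μ (fun y => ζ y σ) x)) / 2))) + (pd μ (fun y => ξ y ρ) x * (((G x ν σ * pd ρ (fun y => ζ y σ) x) + (((((pd ρ (fun y => G y σ ν) x + pd σ (fun y => G y ρ ν) x) - pd ν (fun y => G y ρ σ) x) / 2) + (e * (((pd ρ (fun y => B y σ ν) x + pd σ (fun y => B y ν ρ) x) + pd ν (fun y => B y ρ σ) x) / 2))) * ζ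 x σ)) + (((G x ρ σ * pd ν (fun y => ζ y σ) x) + (((((pd ν (fun y => G y σ ρ) x + pd σ (fun y => G y ν ρ) x) - pd ρ (fun y => G y ν σ) x) / 2) + (e * (((pd ν (fun y => B y σ ρ) x + pd σ (fun y => B y ρ ν) x) + pd ρ (fun y => B y ν σ) x) / 2))) * ζ x σ)) / 2)))) + (pd ν (fun y => ξ y ρ) x * (((G x ρ σ * pd μ (fun y => ζ y σ) x) + (((((pd μ (fun y => G y σ ρ) x + pd σ (fun y => G y μ ρ) x) - pd ρ (fun y => G y μ σ) x) / 2) + (e * (((pd μ (fun y => B y σ ρ) x + pd σ (fun y => B y ρ μ) x) + pd ρ (fun y => B y μ σ) x) / 2))) * ζ x σ)) / 2))))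

theorem anti_lem (e : ℝ) (G B : (Fin D → ℝ) → Fin D → Fin D → ℝ)
    (hGs : Smooth2T G) (hGsym : ∀ x μ ν, G x μ ν = G x ν μ)
    (hBs : Smooth2T B) (hBanti : ∀ x μ ν, B x μ ν = -B x ν μ)
    (ζ ξ : (Fin D → ℝ) → Fin D → ℝ) (hζ : SmoothVF ζ) (hξ : SmoothVF ξ)
    (μ ν : Fin D) (x : Fin D → ℝ) (ρ σ : Fin D) :
    (Lt e G B ζ ξ μ ν x ρ σ - Rt e G B ζ ξ μ ν x ρ σ)
      + (Lt e G B ζ ξ μ ν x σ ρ - Rt e G B ζ ξ μ ν x σ ρ) = 0 := by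
  have sg : ∀ a b : Fin D, G x a b = G x b a := fun a b => hGsym x a b
  have sdg : ∀ c a b : Fin D, pd c (fun y => G y a b) x = pd c (fun y => G y b a) x :=
    fun c a b => by rw [show (fun y => G y a b) = (fun y => G y b a) from
      funext fun y => hGsym y a b]
  have sddg : ∀ c d a b : Fin D, pd c (fun y => pd d (fun z => G z a b) y) x
      = pd c (fun y => pd d (fun z => G z b a) y) x := fun c d a b => by
    rw [show (fun z => G z a b) = (fun z => G z b a) from funext fun z => hGsym z a b]
  have cddg : ∀ c d a b : Fin D, pd c (fun y => pd d (fun z => G z a b) y) x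
      = pd d (fun y => pd c (fun z => G z a b) y) x := fun c d a b => pd_comm (hGs a b) c d
  have sdb : ∀ c a b : Fin D, pd c (fun y => B y a b) x = -pd c (fun y => B y b a) x :=
    fun c a b => by
      rw [show (fun y => B y a b) = (fun y => -B y b a) from funext fun y => hBanti y a b,
        pd_neg]
  have sddb : ∀ c d a b : Fin D, pd c (fun y => pd d (fun z => B z a b) y) x
      = -pd c (fun y => pd d (fun z => B z b a) y) x := fun c d a b => by
    rw [show (fun z => B z a b) = (fun z => -B z b a) from funext fun z => hBanti z a b,
      show (fun y => pd d (fun z => -B z b a) y) = (fun y => -pd d (fun z => B z b a) y) from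
        funext fun y => pd_neg, pd_neg]
  have cddb : ∀ c d a b : Fin D, pd c (fun y => pd d (fun z => B z a b) y) x
      = pd d (fun y => pd c (fun z => B z a b) y) x := fun c d a b => pd_comm (hBs a b) c d
  have cddz : ∀ c d a : Fin D, pd c (fun y => pd d (fun z => ζ z a) y) x
      = pd d (fun y => pd c (fun z => ζ z a) y) x := fun c d a => pd_comm (hζ a) c d
  have cddx : ∀ c d a : Fin D, pd c (fun y => pd d (fun z => ξ z a) y) x
      = pd d (fun y => pd c (fun z => ξ z a) y) x := fun c d a => pd_comm (hξ a) c d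
  simp only [Lt, Rt]
  linear_combination -(1 : ℝ) * (G x ν σ) * (ζ x ρ) * (cddx ρ μ σ) +
      -((1 : ℝ)/2) * (ξ x σ) * (ζ x ρ) * (cddg ρ μ σ ν) +
      ((1 : ℝ)/2) * (ξ x σ) * (ζ x ρ) * (cddg ρ ν μ σ) +
      -((1 : ℝ)/2) * (e) * (ξ x σ) * (ζ x ρ) * (cddb ρ μ σ ν) +
      -((1 : ℝ)/2) * (e) * (ξ x σ) * (ζ x ρ) * (sddb ρ σ ν μ) +
      -((1 : ℝ)/2) * (e) * (ξ x σ) * (ζ x ρ) * (cddb ρ ν μ σ) +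
      ((1 : ℝ)/2) * (G x ρ σ) * (ζ x ρ) * (cddx ν μ σ) +
      ((1 : ℝ)/4) * (ξ x σ) * (ζ x ρ) * (cddg ν μ σ ρ) +
      ((1 : ℝ)/4) * (e) * (ξ x σ) * (ζ x ρ) * (cddb ν μ σ ρ) +
      ((1 : ℝ)/4) * (e) * (ξ x σ) * (ζ x ρ) * (sddb ν σ ρ μ) +
      ((1 : ℝ)/4) * (pd ν (fun y => ξ y σ) x) * (ζ x ρ) * (sdg μ σ ρ) +
      ((1 : ℝ)/4) * (pd ν (fun y => ξ y σ) x) * (e) * (ζ x ρ) * (sdb μ σ ρ) +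
      ((1 : ℝ)/4) * (pd ν (fun y => ξ y σ) x) * (e) * (ζ x ρ) * (sdb σ ρ μ) +
      -((1 : ℝ)/4) * (e) * (ξ x σ) * (ζ x ρ) * (sddb μ σ ρ ν) +
      -((3 : ℝ)/4) * (pd μ (fun y => ξ y σ) x) * (ζ x ρ) * (sdg ν σ ρ) +
      ((1 : ℝ)/4) * (pd μ (fun y => ξ y σ) x) * (e) * (ζ x ρ) * (sdb ν σ ρ) +
      ((1 : ℝ)/4) * (pd μ (fun y => ξ y σ) x) * (e) * (ζ x ρ) * (sdb σ ρ ν) +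
      -((1 : ℝ)/2) * (pd μ (fun y => ζ y ρ) x) * (ξ x σ) * (sdg ρ σ ν) +
      -((1 : ℝ)/2) * (pd μ (fun y => ζ y ρ) x) * (ξ x σ) * (sdg σ ρ ν) +
      -((1 : ℝ)/4) * (pd μ (fun y => ζ y ρ) x) * (e) * (ξ x σ) * (sdb ρ σ ν) +
      -((3 : ℝ)/4) * (pd μ (fun y => ζ y ρ) x) * (ξ x σ) * (sdg ν σ ρ) +
      -((1 : ℝ)/4) * (pd μ (fun y => ζ y ρ) x) * (e) * (ξ x σ) * (sdb ν σ ρ) +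
      -((1 : ℝ)/4) * (pd μ (fun y => ζ y ρ) x) * (e) * (ξ x σ) * (sdb σ ρ ν) +
      ((1 : ℝ)/4) * (pd ν (fun y => ζ y ρ) x) * (ξ x σ) * (sdg μ σ ρ) +
      -((1 : ℝ)/4) * (pd ν (fun y => ζ y ρ) x) * (e) * (ξ x σ) * (sdb μ σ ρ) +
      -((1 : ℝ)/4) * (pd ν (fun y => ζ y ρ) x) * (e) * (ξ x σ) * (sdb σ ρ μ) +
      (1 : ℝ) * (G x ν σ) * (ξ x ρ) * (cddz ρ μ σ) +
      ((1 : ℝ)/2) * (ξ x ρ) * (ζ x σ) * (cddg ρ μ σ ν) +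
      -((1 : ℝ)/2) * (ξ x ρ) * (ζ x σ) * (cddg ρ ν μ σ) +
      ((1 : ℝ)/2) * (e) * (ξ x ρ) * (ζ x σ) * (cddb ρ μ σ ν) +
      ((1 : ℝ)/2) * (e) * (ξ x ρ) * (ζ x σ) * (sddb ρ σ ν μ) +
      ((1 : ℝ)/2) * (e) * (ξ x ρ) * (ζ x σ) * (cddb ρ ν μ σ) +
      -((1 : ℝ)/2) * (G x ρ σ) * (ξ x ρ) * (cddz ν μ σ) +
      -((1 : ℝ)/4) * (ξ x ρ) * (ζ x σ) * (cddg ν μ σ ρ) +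
      -((1 : ℝ)/4) * (e) * (ξ x ρ) * (ζ x σ) * (cddb ν μ σ ρ) +
      -((1 : ℝ)/4) * (e) * (ξ x ρ) * (ζ x σ) * (sddb ν σ ρ μ) +
      -((1 : ℝ)/4) * (pd ν (fun y => ζ y σ) x) * (ξ x ρ) * (sdg μ σ ρ) +
      -((1 : ℝ)/4) * (pd ν (fun y => ζ y σ) x) * (e) * (ξ x ρ) * (sdb μ σ ρ) +
      -((1 : ℝ)/4) * (pd ν (fun y => ζ y σ) x) * (e) * (ξ x ρ) * (sdb σ ρ μ) +
      ((1 : ℝ)/4) * (e) * (ξ x ρ) * (ζ x σ) * (sddb μ σ ρ ν) +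
      ((3 : ℝ)/4) * (pd μ (fun y => ζ y σ) x) * (ξ x ρ) * (sdg ν σ ρ) +
      -((1 : ℝ)/4) * (pd μ (fun y => ζ y σ) x) * (e) * (ξ x ρ) * (sdb ν σ ρ) +
      -((1 : ℝ)/4) * (pd μ (fun y => ζ y σ) x) * (e) * (ξ x ρ) * (sdb σ ρ ν) +
      ((1 : ℝ)/2) * (pd μ (fun y => ξ y ρ) x) * (ζ x σ) * (sdg ρ σ ν) +
      ((1 : ℝ)/2) * (pd μ (fun y => ξ y ρ) x) * (ζ x σ) * (sdg σ ρ ν) +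
      ((1 : ℝ)/4) * (pd μ (fun y => ξ y ρ) x) * (e) * (ζ x σ) * (sdb ρ σ ν) +
      ((3 : ℝ)/4) * (pd μ (fun y => ξ y ρ) x) * (ζ x σ) * (sdg ν σ ρ) +
      ((1 : ℝ)/4) * (pd μ (fun y => ξ y ρ) x) * (e) * (ζ x σ) * (sdb ν σ ρ) +
      ((1 : ℝ)/4) * (pd μ (fun y => ξ y ρ) x) * (e) * (ζ x σ) * (sdb σ ρ ν) +
      -((1 : ℝ)/4) * (pd ν (fun y => ξ y ρ) x) * (ζ x σ) * (sdg μ σ ρ) +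
      ((1 : ℝ)/4) * (pd ν (fun y => ξ y ρ) x) * (e) * (ζ x σ) * (sdb μ σ ρ) +
      ((1 : ℝ)/4) * (pd ν (fun y => ξ y ρ) x) * (e) * (ζ x σ) * (sdb σ ρ μ) +
      -(1 : ℝ) * (G x ν ρ) * (ζ x σ) * (cddx σ μ ρ) +
      -((1 : ℝ)/2) * (ξ x ρ) * (ζ x σ) * (cddg σ μ ρ ν) +
      -((1 : ℝ)/2) * (ξ x ρ) * (ζ x σ) * (cddg σ ρ μ ν) +
      ((1 : ℝ)/2) * (ξ x ρ) * (ζ x σ) * (cddg σ ν μ ρ) +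
      -((1 : ℝ)/2) * (e) * (ξ x ρ) * (ζ x σ) * (cddb σ μ ρ ν) +
      -((1 : ℝ)/2) * (e) * (ξ x ρ) * (ζ x σ) * (cddb σ ρ ν μ) +
      -((1 : ℝ)/2) * (e) * (ξ x ρ) * (ζ x σ) * (cddb σ ν μ ρ) +
      ((1 : ℝ)/2) * (G x σ ρ) * (ζ x σ) * (cddx ν μ ρ) +
      ((1 : ℝ)/4) * (ξ x ρ) * (ζ x σ) * (cddg ν μ ρ σ) +
      ((1 : ℝ)/4) * (e) * (ξ x ρ) * (ζ x σ) * (cddb ν μ ρ σ) +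
      ((1 : ℝ)/4) * (e) * (ξ x ρ) * (ζ x σ) * (sddb ν ρ σ μ) +
      ((1 : ℝ)/4) * (pd ν (fun y => ξ y ρ) x) * (e) * (ζ x σ) * (sdb ρ σ μ) +
      ((1 : ℝ)/4) * (e) * (ξ x ρ) * (ζ x σ) * (sddb μ ρ σ ν) +
      -((1 : ℝ)/2) * (pd μ (fun y => ζ y σ) x) * (ξ x ρ) * (sdg σ ρ ν) +
      -((1 : ℝ)/2) * (pd μ (fun y => ζ y σ) x) * (ξ x ρ) * (sdg ρ σ ν) +
      -((1 : ℝ)/2) * (pd ν (fun y => ξ y ρ) x) * (pd μ (fun y => ζ y σ) x) * (sg σ ρ) +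
      -((1 : ℝ)/4) * (pd μ (fun y => ζ y σ) x) * (e) * (ξ x ρ) * (sdb ρ σ ν) +
      -((1 : ℝ)/2) * (pd μ (fun y => ξ y ρ) x) * (pd ν (fun y => ζ y σ) x) * (sg σ ρ) +
      -((1 : ℝ)/4) * (pd ν (fun y => ζ y σ) x) * (e) * (ξ x ρ) * (sdb ρ σ μ) +
      (1 : ℝ) * (G x ν ρ) * (ξ x σ) * (cddz σ μ ρ) +
      ((1 : ℝ)/2) * (ξ x σ) * (ζ x ρ) * (cddg σ μ ρ ν) +
      ((1 : ℝ)/2) * (ξ x σ) * (ζ x ρ) * (cddg σ ρ μ ν) +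
      -((1 : ℝ)/2) * (ξ x σ) * (ζ x ρ) * (cddg σ ν μ ρ) +
      ((1 : ℝ)/2) * (e) * (ξ x σ) * (ζ x ρ) * (cddb σ μ ρ ν) +
      ((1 : ℝ)/2) * (e) * (ξ x σ) * (ζ x ρ) * (cddb σ ρ ν μ) +
      ((1 : ℝ)/2) * (e) * (ξ x σ) * (ζ x ρ) * (cddb σ ν μ ρ) +
      -((1 : ℝ)/2) * (G x σ ρ) * (ξ x σ) * (cddz ν μ ρ) +
      -((1 : ℝ)/4) * (ξ x σ) * (ζ x ρ) * (cddg ν μ ρ σ) +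
      -((1 : ℝ)/4) * (e) * (ξ x σ) * (ζ x ρ) * (cddb ν μ ρ σ) +
      -((1 : ℝ)/4) * (e) * (ξ x σ) * (ζ x ρ) * (sddb ν ρ σ μ) +
      -((1 : ℝ)/4) * (pd ν (fun y => ζ y ρ) x) * (e) * (ξ x σ) * (sdb ρ σ μ) +
      -((1 : ℝ)/4) * (e) * (ξ x σ) * (ζ x ρ) * (sddb μ ρ σ ν) +
      ((1 : ℝ)/2) * (pd μ (fun y => ξ y σ) x) * (ζ x ρ) * (sdg σ ρ ν) +
      ((1 : ℝ)/2) * (pd μ (fun y => ξ y σ) x) * (ζ x ρ) * (sdg ρ σ ν) +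
      ((1 : ℝ)/2) * (pd μ (fun y => ξ y σ) x) * (pd ν (fun y => ζ y ρ) x) * (sg σ ρ) +
      ((1 : ℝ)/4) * (pd μ (fun y => ξ y σ) x) * (e) * (ζ x ρ) * (sdb ρ σ ν) +
      ((1 : ℝ)/2) * (pd ν (fun y => ξ y σ) x) * (pd μ (fun y => ζ y ρ) x) * (sg σ ρ) +
      ((1 : ℝ)/4) * (pd ν (fun y => ξ y σ) x) * (e) * (ζ x ρ) * (sdb ρ σ μ) +
      -((1 : ℝ)/2) * (ξ x σ) * (ζ x ρ) * (sddg μ ρ σ ν) +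
      ((1 : ℝ)/2) * (ξ x ρ) * (ζ x σ) * (sddg μ ρ σ ν) +
      -((1 : ℝ)/2) * (ξ x ρ) * (ζ x σ) * (sddg μ σ ρ ν) +
      -((1 : ℝ)/2) * (e) * (ξ x ρ) * (ζ x σ) * (sddb μ σ ρ ν) +
      -((1 : ℝ)/2) * (e) * (ξ x ρ) * (ζ x σ) * (sddb ρ σ ν μ) +
      ((1 : ℝ)/2) * (ξ x σ) * (ζ x ρ) * (sddg μ σ ρ ν) +
      ((1 : ℝ)/2) * (e) * (ξ x σ) * (ζ x ρ) * (sddb μ σ ρ ν) +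
      ((1 : ℝ)/2) * (e) * (ξ x σ) * (ζ x ρ) * (sddb ρ σ ν μ)

set_option maxHeartbeats 2000000 in
theorem key (e : ℝ) (G B : (Fin D → ℝ) → Fin D → Fin D → ℝ)
    (hGs : Smooth2T G) (hGsym : ∀ x μ ν, G x μ ν = G x ν μ)
    (hBs : Smooth2T B) (hBanti : ∀ x μ ν, B x μ ν = -B x ν μ)
    (ζ ξ : (Fin D → ℝ) → Fin D → ℝ) (hζ : SmoothVF ζ) (hξ : SmoothVF ξ)
    (μ ν : Fin D) (x : Fin D → ℝ) :
    DDe e G B (fun y σ => (∑ ρ, ζ y ρ * pd ρ (fun z => ξ z σ) y)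
        - ∑ ρ, ξ y ρ * pd ρ (fun z => ζ z σ) y) μ ν x
    = (∑ ρ, (ζ x ρ * (pd ρ (fun y => DDe e G B ξ μ ν y) x
          - pd ν (fun y => DDe e G B ξ μ ρ y) x / 2 + pd μ (fun y => DDe e G B ξ ν ρ y) x / 2)
        + pd μ (fun y => ζ y ρ) x * (DDe e G B ξ ρ ν x + DDe e G B ξ ν ρ x / 2)
        + pd ν (fun y => ζ y ρ) x * (DDe e G B ξ μ ρ x / 2)))
      - ∑ ρ, (ξ x ρ * (pd ρ (fun y => DDe e G B ζ μ ν y) x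
          - pd ν (fun y => DDe e G B ζ μ ρ y) x / 2 + pd μ (fun y => DDe e G B ζ ν ρ y) x / 2)
        + pd μ (fun y => ξ y ρ) x * (DDe e G B ζ ρ ν x + DDe e G B ζ ν ρ x / 2)
        + pd ν (fun y => ξ y ρ) x * (DDe e G B ζ μ ρ x / 2)) := by
  have hbr : ∀ ρ : Fin D, pd μ (fun y => (∑ σ, ζ y σ * pd σ (fun z => ξ z ρ) y)
      - ∑ σ, ξ y σ * pd σ (fun z => ζ z ρ) y) x
      = (∑ σ, (pd μ (fun y => ζ y σ) x * pd σ (fun z => ξ z ρ) x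
          + ζ x σ * pd μ (fun y => pd σ (fun z => ξ z ρ) y) x))
        - ∑ σ, (pd μ (fun y => ξ y σ) x * pd σ (fun z => ζ z ρ) x
          + ξ x σ * pd μ (fun y => pd σ (fun z => ζ z ρ) y) x) := by
    intro ρ
    rw [pd_sub (Sm.sum' fun i _ => Sm.mul' (hζ i) (Sm.pd (hξ ρ))).diffAt
        (Sm.sum' fun i _ => Sm.mul' (hξ i) (Sm.pd (hζ ρ))).diffAt,
      pd_sum (fun i _ => (Sm.mul' (hζ i) (Sm.pd (hξ ρ))).diffAt),
      pd_sum (fun i _ => (Sm.mul' (hξ i) (Sm.pd (hζ ρ))).diffAt)]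
    exact congrArg₂ (· - ·)
      (Finset.sum_congr rfl fun σ _ => pd_mul (hζ σ).diffAt (Sm.pd (hξ ρ)).diffAt)
      (Finset.sum_congr rfl fun σ _ => pd_mul (hξ σ).diffAt (Sm.pd (hζ ρ)).diffAt)
  have hL : DDe e G B (fun y σ => (∑ ρ, ζ y ρ * pd ρ (fun z => ξ z σ) y)
      - ∑ ρ, ξ y ρ * pd ρ (fun z => ζ z σ) y) μ ν x = ∑ ρ, ∑ σ, Lt e G B ζ ξ μ ν x ρ σ := by
    show (∑ ρ, G x ν ρ * pd μ (fun y => (∑ σ, ζ y σ * pd σ (fun z => ξ z ρ) y)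
        - ∑ σ, ξ y σ * pd σ (fun z => ζ z ρ) y) x)
      + ∑ ρ, GamE e G B μ ρ ν x * ((∑ σ, ζ x σ * pd σ (fun z => ξ z ρ) x)
        - ∑ σ, ξ x σ * pd σ (fun z => ζ z ρ) x) = _
    rw [← Finset.sum_add_distrib]
    refine Finset.sum_congr rfl fun ρ _ => ?_
    rw [hbr ρ]
    simp only [GamE, Gam, Htor, Lt]
    simp only [mul_sub, Finset.mul_sum, ← Finset.sum_sub_distrib, ← Finset.sum_add_distrib]
    try exact Finset.sum_congr rfl fun σ _ => by ring
  have hR : (∑ ρ, (ζ x ρ * (pd ρ (fun y => DDe e G B ξ μ ν y) x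
          - pd ν (fun y => DDe e G B ξ μ ρ y) x / 2 + pd μ (fun y => DDe e G B ξ ν ρ y) x / 2)
        + pd μ (fun y => ζ y ρ) x * (DDe e G B ξ ρ ν x + DDe e G B ξ ν ρ x / 2)
        + pd ν (fun y => ζ y ρ) x * (DDe e G B ξ μ ρ x / 2)))
      - ∑ ρ, (ξ x ρ * (pd ρ (fun y => DDe e G B ζ μ ν y) x
          - pd ν (fun y => DDe e G B ζ μ ρ y) x / 2 + pd μ (fun y => DDe e G B ζ ν ρ y) x / 2)
        + pd μ (fun y => ξ y ρ) x * (DDe e G B ζ ρ ν x + DDe e G B ζ ν ρ x / 2)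
        + pd ν (fun y => ξ y ρ) x * (DDe e G B ζ μ ρ x / 2))
      = ∑ ρ, ∑ σ, Rt e G B ζ ξ μ ν x ρ σ := by
    rw [← Finset.sum_sub_distrib]
    refine Finset.sum_congr rfl fun ρ _ => ?_
    rw [pd_DDe e G B ξ hGs hBs hξ ρ μ ν x, pd_DDe e G B ξ hGs hBs hξ ν μ ρ x,
      pd_DDe e G B ξ hGs hBs hξ μ ν ρ x, pd_DDe e G B ζ hGs hBs hζ ρ μ ν x,
      pd_DDe e G B ζ hGs hBs hζ ν μ ρ x, pd_DDe e G B ζ hGs hBs hζ μ ν ρ x,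
      DDe_val e G B ξ ρ ν x, DDe_val e G B ξ ν ρ x, DDe_val e G B ξ μ ρ x,
      DDe_val e G B ζ ρ ν x, DDe_val e G B ζ ν ρ x, DDe_val e G B ζ μ ρ x]
    simp only [Rt]
    simp only [Finset.sum_div, mul_sub, Finset.mul_sum, ← Finset.sum_sub_distrib,
      ← Finset.sum_add_distrib]
    try exact Finset.sum_congr rfl fun σ _ => by ring
  rw [hL, hR]
  have hz : ∑ ρ, ∑ σ, (Lt e G B ζ ξ μ ν x ρ σ - Rt e G B ζ ξ μ ν x ρ σ) = 0 :=
    sum_anti _ fun ρ σ => anti_lem e G B hGs hGsym hBs hBanti ζ ξ hζ hξ μ ν x ρ σ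
  simp only [Finset.sum_sub_distrib] at hz
  linarith
end Key

theorem bothZero {D : ℕ} (eE : ℝ) (G B : (Fin D → ℝ) → Fin D → Fin D → ℝ)
    (hGs : Smooth2T G) (hGsym : ∀ x μ ν, G x μ ν = G x ν μ)
    (hBs : Smooth2T B) (hBanti : ∀ x μ ν, B x μ ν = -B x ν μ)
    (ζ ξ : (Fin D → ℝ) → Fin D → ℝ) (hζ : SmoothVF ζ) (hξ : SmoothVF ξ)
    (h1 : ∀ μ ν x, DDe eE G B ζ μ ν x = 0) (h2 : ∀ μ ν x, DDe eE G B ξ μ ν x = 0)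
    (μ ν : Fin D) (x : Fin D → ℝ) :
    DDe eE G B (fun y σ => (∑ ρ, ζ y ρ * pd ρ (fun z => ξ z σ) y)
      - ∑ ρ, ξ y ρ * pd ρ (fun z => ζ z σ) y) μ ν x = 0 := by
  rw [key eE G B hGs hGsym hBs hBanti ζ ξ hζ hξ μ ν x]
  have fz : ∀ m n : Fin D, (fun y => DDe eE G B ζ m n y) = (fun _ => (0:ℝ)) :=
    fun m n => funext fun y => h1 m n y
  have fx : ∀ m n : Fin D, (fun y => DDe eE G B ξ m n y) = (fun _ => (0:ℝ)) :=
    fun m n => funext fun y => h2 m n y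
  simp [fz, fx, pd_zero, h1, h2]

/-- The Lie bracket of two covariantly constant vector fields of the same chirality is again
covariantly constant of that chirality. -/
theorem stmt11 {D : ℕ} (hD : 1 ≤ D)
    (G B : (Fin D → ℝ) → Fin D → Fin D → ℝ)
    (hGs : Smooth2T G) (hGsym : ∀ x μ ν, G x μ ν = G x ν μ)
    (hBs : Smooth2T B) (hBanti : ∀ x μ ν, B x μ ν = -B x ν μ)
    (ζ ξ : (Fin D → ℝ) → Fin D → ℝ) (hζ : SmoothVF ζ) (hξ : SmoothVF ξ) :
    ((∀ μ ν x, Dp G B ζ μ ν x = 0) → (∀ μ ν x, Dp G B ξ μ ν x = 0) →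
       ∀ μ ν x, Dp G B
         (fun y σ => (∑ ρ, ζ y ρ * pd ρ (fun z => ξ z σ) y)
           - ∑ ρ, ξ y ρ * pd ρ (fun z => ζ z σ) y) μ ν x = 0) ∧
    ((∀ μ ν x, Dm G B ζ μ ν x = 0) → (∀ μ ν x, Dm G B ξ μ ν x = 0) →
       ∀ μ ν x, Dm G B
         (fun y σ => (∑ ρ, ζ y ρ * pd ρ (fun z => ξ z σ) y)
           - ∑ ρ, ξ y ρ * pd ρ (fun z => ζ z σ) y) μ ν x = 0) := by
  constructor
  · intro h1 h2 μ ν x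
    have hz1 : ∀ μ ν x, DDe 1 G B ζ μ ν x = 0 := fun m n y => by
      rw [← Dp_eq]; exact h1 m n y
    have hz2 : ∀ μ ν x, DDe 1 G B ξ μ ν x = 0 := fun m n y => by
      rw [← Dp_eq]; exact h2 m n y
    rw [Dp_eq]
    exact bothZero 1 G B hGs hGsym hBs hBanti ζ ξ hζ hξ hz1 hz2 μ ν x
  · intro h1 h2 μ ν x
    have hz1 : ∀ μ ν x, DDe (-1) G B ζ μ ν x = 0 := fun m n y => by
      rw [← Dm_eq]; exact h1 m n y
    have hz2 : ∀ μ ν x, DDe (-1) G B ξ μ ν x = 0 := fun m n y => by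
      rw [← Dm_eq]; exact h2 m n y
    rw [Dm_eq]
    exact bothZero (-1) G B hGs hGsym hBs hBanti ζ ξ hζ hξ hz1 hz2 μ ν x
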